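/- For every positive integer n, if θ is a complex root of X^2 - sX + 1 where s = (6+n - √(n²+8n+4))/2, then |θ| = 1. In particular P_n(X) = X^4 - (6+n)X^3 + (10+n)X^2 - (6+n)X + 1 has two complex conjugate roots of modulus 1. -/

import Mathlib

/-- If `θ` is a complex root of `X² - sX + 1` where `s = (6+n - √(n²+8n+4))/2`, then
`|θ| = 1`.  In particular `P_n(X) = X^4 - (6+n)X^3 + (10+n)X^2 - (6+n)X + 1` has two
complex conjugate roots of modulus 1. -/
theorem stmt2 (n : ℕ) (hn : 0 < n) :
    (∀ θ : ℂ,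
        θ^2 - ((((6 + (n:ℝ) - Real.sqrt ((n:ℝ)^2 + 8*n + 4)) / 2 : ℝ) : ℂ)) * θ + 1 = 0 →
        ‖θ‖ = 1)
    ∧ ∃ θ : ℂ, θ.im ≠ 0 ∧ ‖θ‖ = 1 ∧
        θ^4 - (6+(n:ℂ))*θ^3 + (10+(n:ℂ))*θ^2 - (6+(n:ℂ))*θ + 1 = 0 ∧
        (starRingEnd ℂ θ)^4 - (6+(n:ℂ))*(starRingEnd ℂ θ)^3 + (10+(n:ℂ))*(starRingEnd ℂ θ)^2
          - (6+(n:ℂ))*(starRingEnd ℂ θ) + 1 = 0 := by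
  set A : ℝ := (n:ℝ)^2 + 8*n + 4 with hA
  have hA0 : 0 ≤ A := by positivity
  set r : ℝ := Real.sqrt A with hrdef
  have hr0 : 0 ≤ r := Real.sqrt_nonneg A
  have hr2 : r^2 = A := Real.sq_sqrt hA0
  have hn1 : (1:ℝ) ≤ (n:ℝ) := by exact_mod_cast hn
  have hrlow : (n:ℝ) + 2 < r := by nlinarith [sq_nonneg (r - ((n:ℝ)+2))]
  have hrhigh : r < (n:ℝ) + 4 := by nlinarith [sq_nonneg (r - ((n:ℝ)+4))]
  set S : ℝ := (6 + (n:ℝ) - r) / 2 with hSdef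
  have hS1 : 1 < S := by rw [hSdef]; linarith
  have hS2 : S < 2 := by rw [hSdef]; linarith
  -- Part 1
  have part1 : ∀ θ : ℂ, θ^2 - (S:ℂ) * θ + 1 = 0 → ‖θ‖ = 1 := by
    intro θ hθ
    have hconj : (starRingEnd ℂ θ)^2 - (S:ℂ) * (starRingEnd ℂ θ) + 1 = 0 := by
      have := congrArg (starRingEnd ℂ) hθ
      simpa using this
    have hfac : (θ - starRingEnd ℂ θ) * (θ + starRingEnd ℂ θ - S) = 0 := by
      linear_combination hθ - hconj
    rcases mul_eq_zero.mp hfac with h | h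
    · exfalso
      have him : θ.im = 0 := by
        have := congrArg Complex.im h
        simpa using this
      have hre : θ = ((θ.re : ℝ) : ℂ) := by
        exact (Complex.ext (by simp) (by simp [him])).symm
      rw [hre] at hθ
      have : ((θ.re^2 - S * θ.re + 1 : ℝ) : ℂ) = 0 := by push_cast; linear_combination hθ
      have hreal : θ.re^2 - S * θ.re + 1 = 0 := by exact_mod_cast this
      nlinarith [sq_nonneg (θ.re - S/2)]
    · have hmul : θ * starRingEnd ℂ θ = 1 := by linear_combination θ * h - hθ
      have : (Complex.normSq θ : ℂ) = 1 := by rw [← Complex.mul_conj]; exact hmul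
      have hns : Complex.normSq θ = 1 := by exact_mod_cast this
      have : ‖θ‖ ^ 2 = 1 := by rw [Complex.sq_norm]; exact hns
      nlinarith [norm_nonneg θ]
  refine ⟨part1, ?_⟩
  -- explicit root
  have hS4 : 0 < 4 - S^2 := by nlinarith
  set u : ℝ := Real.sqrt (4 - S^2) with hudef
  have hu0 : 0 < u := Real.sqrt_pos.mpr hS4
  have hu2 : ((u:ℂ))^2 = 4 - (S:ℂ)^2 := by exact_mod_cast Real.sq_sqrt (le_of_lt hS4)
  set θ : ℂ := (S/2 : ℝ) + (u/2 : ℝ) * Complex.I with hθdef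
  have hquad : θ^2 - (S:ℂ) * θ + 1 = 0 := by
    rw [hθdef]; push_cast
    linear_combination ((u:ℂ)^2/4) * Complex.I_sq - (1/4:ℂ) * hu2
  have him : θ.im ≠ 0 := by
    rw [hθdef]; simp; positivity
  -- quartic factorization
  set T : ℝ := (6 + (n:ℝ) + r) / 2 with hTdef
  have hsum : (S:ℂ) + (T:ℂ) = 6 + (n:ℂ) := by
    rw [hSdef, hTdef]; push_cast; ring
  have hprod : (S:ℂ) * (T:ℂ) = 8 + (n:ℂ) := by
    have hr2C : (r:ℂ)^2 = (n:ℂ)^2 + 8*(n:ℂ) + 4 := by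
      exact_mod_cast congrArg (Complex.ofReal) (hr2.trans hA)
    rw [hSdef, hTdef]; push_cast
    linear_combination (-(1:ℂ)/4) * hr2C
  have hq4 : θ^4 - (6+(n:ℂ))*θ^3 + (10+(n:ℂ))*θ^2 - (6+(n:ℂ))*θ + 1 = 0 := by
    linear_combination (θ^2 - (T:ℂ)*θ + 1) * hquad + (θ^3 + θ) * hsum - θ^2 * hprod
  have hq4c : (starRingEnd ℂ θ)^4 - (6+(n:ℂ))*(starRingEnd ℂ θ)^3
      + (10+(n:ℂ))*(starRingEnd ℂ θ)^2 - (6+(n:ℂ))*(starRingEnd ℂ θ) + 1 = 0 := by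
    have := congrArg (starRingEnd ℂ) hq4
    simpa [map_ofNat] using this
  exact ⟨θ, him, part1 θ hquad, hq4, hq4c⟩
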